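/- Let A_oct = {a ∈ ℕ : a ≥ 1 and a ≡ 1 (mod 8)}. Then every element d of D_{A_oct} satisfies d ≢ 4 (mod 8); in particular, A_oct has a local obstruction at the modulus 8. -/
import Mathlib


/-- The generator matrix `[[0,1],[1,a]]`. -/
def cfGen (a : ℕ) : Matrix (Fin 2) (Fin 2) ℤ := !![0, 1; 1, (a : ℤ)]

/-- The semigroup `G_A`: all nonempty finite products of the generators
`[[0,1],[1,a]]` with `a ∈ A`. -/
def GSemigroup (A : Set ℕ) : Set (Matrix (Fin 2) (Fin 2) ℤ) :=
  { M | ∃ l : List ℕ, l ≠ [] ∧ (∀ a ∈ l, a ∈ A) ∧ M = (l.map cfGen).prod }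

/-- The set `D_A` of bottom-right entries of matrices in `G_A`. -/
def Denoms (A : Set ℕ) : Set ℕ :=
  { d | ∃ M ∈ GSemigroup A, M 1 1 = (d : ℤ) }

/-- The alphabet `A_oct = {a ≥ 1 : a ≡ 1 (mod 8)}`. -/
def octAlphabet : Set ℕ := {a : ℕ | 1 ≤ a ∧ a % 8 = 1}

def fibMat : Matrix (Fin 2) (Fin 2) (ZMod 8) := !![0, 1; 1, 1]

lemma fibMat_pow12 : fibMat ^ 12 = 1 := by decide

lemma fibMat_pow_entry (n : ℕ) : (fibMat ^ n) 1 1 ≠ 4 := by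
  rw [pow_eq_pow_mod n fibMat_pow12]
  have h : n % 12 < 12 := Nat.mod_lt _ (by norm_num)
  interval_cases (n % 12) <;> decide

lemma denoms_ne (d : ℕ) (hd : d ∈ Denoms octAlphabet) : (d : ZMod 8) ≠ 4 := by
  obtain ⟨M, ⟨l, -, hmem, rfl⟩, hM⟩ := hd
  let f : Matrix (Fin 2) (Fin 2) ℤ →+* Matrix (Fin 2) (Fin 2) (ZMod 8) :=
    (Int.castRingHom (ZMod 8)).mapMatrix
  have h1 : f ((l.map cfGen).prod) = fibMat ^ l.length := by
    rw [← List.prod_map_hom]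
    rw [List.prod_eq_pow_card _ fibMat, List.length_map]
    intro x hx
    simp only [List.mem_map] at hx
    obtain ⟨a, ha, rfl⟩ := hx
    have h8 : (a : ZMod 8) = 1 := by
      have := (hmem a ha).2
      rw [← ZMod.natCast_mod, this]; simp
    simp [f, cfGen, fibMat, RingHom.mapMatrix_apply, Matrix.map]
    ext i j
    fin_cases i <;> fin_cases j <;> simp [h8]
  have h2 : f ((l.map cfGen).prod) 1 1 = (d : ZMod 8) := by
    simp [f, RingHom.mapMatrix_apply, Matrix.map_apply, hM]
  rw [h1] at h2
  rw [← h2]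
  exact fibMat_pow_entry _

/-- Every `d ∈ D_{A_oct}` satisfies `d ≢ 4 (mod 8)`; in particular `A_oct` has a
local obstruction at the modulus 8. -/
theorem octAlphabet_local_obstruction :
    (∀ d ∈ Denoms octAlphabet, ¬ d ≡ 4 [MOD 8]) ∧
    ∃ r : ZMod 8, ∀ d ∈ Denoms octAlphabet, (d : ZMod 8) ≠ r := by
  constructor
  · intro d hd h
    apply denoms_ne d hd
    have := (ZMod.natCast_eq_natCast_iff d 4 8).mpr h
    simpa using this
  · exact ⟨4, denoms_ne⟩
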